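/- For the type B metric on ℝ⁴, the curvature operators satisfy R(∂₁,∂₄) = R(∂₂,∂₃) = R(∂₃,∂₄) = 0, where R(X,Y) = ∇_X∇_Y - ∇_Y∇_X on coordinate vector fields. -/

import Mathlib

open Real

noncomputable def pd {n : ℕ} (i : Fin n) (f : (Fin n → ℝ) → ℝ) (p : Fin n → ℝ) : ℝ :=
  fderiv ℝ f p (Pi.single i 1)

noncomputable def gB (μ : ℝ) (p : Fin 4 → ℝ) : Matrix (Fin 4) (Fin 4) ℝ :=
  Matrix.of
    ![![μ, μ/2, exp (-p 0) / 2, exp (-p 1)],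
      ![μ/2, μ, exp (-p 0), exp (-p 1) / 2],
      ![exp (-p 0) / 2, exp (-p 0), 0, 0],
      ![exp (-p 1), exp (-p 1) / 2, 0, 0]]

/-- Koszul characterization of the Christoffel symbols of the Levi-Civita
connection of the type B metric. -/
def IsChristoffelB (μ : ℝ) (Γ : Fin 4 → Fin 4 → Fin 4 → (Fin 4 → ℝ) → ℝ) : Prop :=
  ∀ (i j k : Fin 4) (p : Fin 4 → ℝ),
    (∑ l, gB μ p l k * Γ l i j p) =
      (1/2) * (pd i (fun q => gB μ q j k) p + pd j (fun q => gB μ q i k) p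
        - pd k (fun q => gB μ q i j) p)

/-- Component of R(∂ᵢ,∂ⱼ)∂ₖ along ∂ₘ, with R(X,Y) = ∇_X∇_Y - ∇_Y∇_X on
coordinate vector fields. -/
noncomputable def Riem4 (Γ : Fin 4 → Fin 4 → Fin 4 → (Fin 4 → ℝ) → ℝ)
    (i j k m : Fin 4) (p : Fin 4 → ℝ) : ℝ :=
  pd i (Γ m j k) p - pd j (Γ m i k) p
    + (∑ l, Γ m i l p * Γ l j k p) - (∑ l, Γ m j l p * Γ l i k p)

/- ### Auxiliary material -/

lemma pd_const {n : ℕ} (i : Fin n) (c : ℝ) (p : Fin n → ℝ) : pd i (fun _ => c) p = 0 := by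
  simp [pd]

noncomputable def projL (j : Fin 4) : (Fin 4 → ℝ) →L[ℝ] ℝ :=
  ContinuousLinearMap.proj (R := ℝ) (φ := fun _ : Fin 4 => ℝ) j

lemma hasF_proj (j : Fin 4) (p : Fin 4 → ℝ) :
    HasFDerivAt (fun q : Fin 4 → ℝ => q j) (projL j) p :=
  (projL j).hasFDerivAt

lemma pd_hasF {f : (Fin 4 → ℝ) → ℝ} {f' : (Fin 4 → ℝ) →L[ℝ] ℝ} {p : Fin 4 → ℝ}
    (h : HasFDerivAt f f' p) (i : Fin 4) : pd i f p = f' (Pi.single i 1) := by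
  rw [pd, h.fderiv]

lemma pd_expneg (i j : Fin 4) (p : Fin 4 → ℝ) :
    pd i (fun q => exp (-q j)) p = if j = i then -exp (-p j) else 0 := by
  rw [pd_hasF (f := fun q => exp (-q j)) (((hasF_proj j p).neg).exp) i]
  rcases eq_or_ne j i with h | h <;> simp [h, projL, Pi.single_apply]

lemma pd_expneg_div (i j : Fin 4) (c : ℝ) (p : Fin 4 → ℝ) :
    pd i (fun q => exp (-q j) / c) p = (if j = i then -exp (-p j) else 0) / c := by
  rw [show (fun q : Fin 4 → ℝ => exp (-q j) / c) = fun q => exp (-q j) * c⁻¹ from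
    funext fun q => div_eq_mul_inv _ _]
  rw [pd_hasF (f := fun q => exp (-q j) * c⁻¹) ((((hasF_proj j p).neg).exp).mul_const c⁻¹) i]
  rcases eq_or_ne j i with h | h <;> simp [h, projL, Pi.single_apply, div_eq_mul_inv] <;> ring

lemma pd_cexp (i j : Fin 4) (c : ℝ) (p : Fin 4 → ℝ) :
    pd i (fun q => c * exp (q j)) p = if j = i then c * exp (p j) else 0 := by
  rw [pd_hasF (((hasF_proj j p).exp).const_mul c) i]
  rcases eq_or_ne j i with h | h <;> simp [h, projL, Pi.single_apply]

lemma pd_cexp_sub (i j j' : Fin 4) (c : ℝ) (p : Fin 4 → ℝ) :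
    pd i (fun q => c * exp (q j - q j')) p =
      c * exp (p j - p j') * ((if j = i then (1:ℝ) else 0) - (if j' = i then (1:ℝ) else 0)) := by
  rw [pd_hasF (f := fun q => c * exp (q j - q j')) ((((hasF_proj j p).sub (hasF_proj j' p)).exp).const_mul c) i]
  rcases eq_or_ne j i with h | h <;> rcases eq_or_ne j' i with h' | h' <;>
    simp [h, h', projL, Pi.single_apply] <;> ring_nf

/-- Explicit Christoffel symbols of the type B metric. -/
noncomputable def ΓB (μ : ℝ) : Fin 4 → Fin 4 → Fin 4 → (Fin 4 → ℝ) → ℝ :=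
  ![![![fun _ => 1/3, fun _ => -(1/3), fun _ => 0, fun _ => 0],
     ![fun _ => -(1/3), fun _ => -(2/3), fun _ => 0, fun _ => 0],
     ![fun _ => 0, fun _ => 0, fun _ => 0, fun _ => 0],
     ![fun _ => 0, fun _ => 0, fun _ => 0, fun _ => 0]],
    ![![fun _ => -(2/3), fun _ => -(1/3), fun _ => 0, fun _ => 0],
     ![fun _ => -(1/3), fun _ => 1/3, fun _ => 0, fun _ => 0],
     ![fun _ => 0, fun _ => 0, fun _ => 0, fun _ => 0],
     ![fun _ => 0, fun _ => 0, fun _ => 0, fun _ => 0]],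
    ![![fun q => 2*μ/3 * exp (q 0), fun q => μ/3 * exp (q 0), fun _ => -(2/3),
        fun q => 2/3 * exp (q 0 - q 1)],
     ![fun q => μ/3 * exp (q 0), fun q => -(μ/3) * exp (q 0), fun _ => -(1/3),
        fun q => 1/3 * exp (q 0 - q 1)],
     ![fun _ => -(2/3), fun _ => -(1/3), fun _ => 0, fun _ => 0],
     ![fun q => 2/3 * exp (q 0 - q 1), fun q => 1/3 * exp (q 0 - q 1), fun _ => 0, fun _ => 0]],
    ![![fun q => -(μ/3) * exp (q 1), fun q => μ/3 * exp (q 1), fun q => 1/3 * exp (q 1 - q 0),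
        fun _ => -(1/3)],
     ![fun q => μ/3 * exp (q 1), fun q => 2*μ/3 * exp (q 1), fun q => 2/3 * exp (q 1 - q 0),
        fun _ => -(2/3)],
     ![fun q => 1/3 * exp (q 1 - q 0), fun q => 2/3 * exp (q 1 - q 0), fun _ => 0, fun _ => 0],
     ![fun _ => -(1/3), fun _ => -(2/3), fun _ => 0, fun _ => 0]]]

lemma fin4_cases : ∀ i : Fin 4, i = 0 ∨ i = 1 ∨ i = 2 ∨ i = 3 := by decide

set_option maxHeartbeats 2000000

lemma isChristoffelB_ΓB (μ : ℝ) : IsChristoffelB μ (ΓB μ) := by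
  intro i j k p
  rcases fin4_cases i with rfl | rfl | rfl | rfl <;>
    rcases fin4_cases j with rfl | rfl | rfl | rfl <;>
      rcases fin4_cases k with rfl | rfl | rfl | rfl <;>
  · simp only [Fin.sum_univ_four, gB, ΓB, Matrix.of_apply, Matrix.cons_val_zero,
      Matrix.cons_val_one, Matrix.head_cons, Matrix.cons_val_two, Matrix.cons_val_three,
      Matrix.tail_cons, Matrix.head_fin_const, pd_const, pd_expneg, pd_expneg_div,
      pd_cexp, pd_cexp_sub, Fin.reduceEq, reduceIte]
    norm_num [Real.exp_neg, Real.exp_sub]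
    try field_simp
    try ring

lemma gB_inj (μ : ℝ) (p : Fin 4 → ℝ) (v : Fin 4 → ℝ)
    (h : ∀ k, (∑ l, gB μ p l k * v l) = 0) : ∀ l, v l = 0 := by
  have h0 := h 0
  have h1 := h 1
  have h2 := h 2
  have h3 := h 3
  simp only [Fin.sum_univ_four, gB, Matrix.of_apply, Matrix.cons_val_zero, Matrix.cons_val_one,
    Matrix.head_cons, Matrix.cons_val_two, Matrix.cons_val_three, Matrix.tail_cons,
    Matrix.head_fin_const] at h0 h1 h2 h3
  have ha := Real.exp_ne_zero (-p 0)
  have hb := Real.exp_ne_zero (-p 1)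
  have E1 : v 0 + 2 * v 1 = 0 := by
    have hE : exp (-p 0) * (v 0 + 2 * v 1) = 0 := by linear_combination 2 * h2
    exact (mul_eq_zero.mp hE).resolve_left ha
  have E2 : 2 * v 0 + v 1 = 0 := by
    have hE : exp (-p 1) * (2 * v 0 + v 1) = 0 := by linear_combination 2 * h3
    exact (mul_eq_zero.mp hE).resolve_left hb
  have hv0 : v 0 = 0 := by linarith
  have hv1 : v 1 = 0 := by linarith
  have hv2 : v 2 = 0 := by
    have hE : exp (-p 0) * (3 * v 2) = 0 := by
      linear_combination 4 * h1 - 2 * h0 - (3 * μ) * hv1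
    have := (mul_eq_zero.mp hE).resolve_left ha
    linarith
  have hv3 : v 3 = 0 := by
    have hE : exp (-p 1) * (3 * v 3) = 0 := by
      linear_combination 4 * h0 - 2 * h1 - (3 * μ) * hv0
    have := (mul_eq_zero.mp hE).resolve_left hb
    linarith
  intro l
  rcases fin4_cases l with rfl | rfl | rfl | rfl <;> assumption

lemma gamma_eq (μ : ℝ) (Γ : Fin 4 → Fin 4 → Fin 4 → (Fin 4 → ℝ) → ℝ)
    (hΓ : IsChristoffelB μ Γ) : Γ = ΓB μ := by
  funext l i j p
  have key : ∀ k, (∑ l', gB μ p l' k * (Γ l' i j p - ΓB μ l' i j p)) = 0 := by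
    intro k
    have e1 := hΓ i j k p
    have e2 := isChristoffelB_ΓB μ i j k p
    calc (∑ l', gB μ p l' k * (Γ l' i j p - ΓB μ l' i j p))
        = (∑ l', gB μ p l' k * Γ l' i j p) - (∑ l', gB μ p l' k * ΓB μ l' i j p) := by
          rw [← Finset.sum_sub_distrib]
          exact Finset.sum_congr rfl fun x _ => by ring
      _ = 0 := by rw [e1, e2]; ring
  have := gB_inj μ p _ key l
  linarith [this]

/-- For the type B metric, R(∂₁,∂₄) = R(∂₂,∂₃) = R(∂₃,∂₄) = 0. -/
theorem curvature_typeB_vanishing (μ : ℝ)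
    (Γ : Fin 4 → Fin 4 → Fin 4 → (Fin 4 → ℝ) → ℝ)
    (hΓsmooth : ∀ k i j, ContDiff ℝ ⊤ (Γ k i j)) (hΓ : IsChristoffelB μ Γ) :
    ∀ (p : Fin 4 → ℝ) (k m : Fin 4),
      Riem4 Γ 0 3 k m p = 0 ∧ Riem4 Γ 1 2 k m p = 0 ∧ Riem4 Γ 2 3 k m p = 0 := by
  have hfun := gamma_eq μ Γ hΓ
  subst hfun
  intro p k m
  refine ⟨?_, ?_, ?_⟩ <;>
    rcases fin4_cases k with rfl | rfl | rfl | rfl <;>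
      rcases fin4_cases m with rfl | rfl | rfl | rfl <;>
  · simp only [Riem4, Fin.sum_univ_four, ΓB, Matrix.cons_val_zero, Matrix.cons_val_one,
      Matrix.head_cons, Matrix.cons_val_two, Matrix.cons_val_three, Matrix.tail_cons,
      Matrix.head_fin_const, pd_const, pd_expneg, pd_expneg_div, pd_cexp, pd_cexp_sub,
      Fin.reduceEq, reduceIte]
    norm_num [Real.exp_neg, Real.exp_sub]
    try field_simp
    try ring
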